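/- (Distortion bound.) Let P be a ranking distribution on S_n, d a metric on S_n, and 𝒫 a partition of S_n such that P(C) > 0 for every cell C ∈ 𝒫. Then for any consensus ranking distribution P_𝒫 = Σ_{C∈𝒫} P(C)·δ_{σ*_C} built from local medians σ*_C, one has W_d(P, P_𝒫) ≤ 𝓔_P(𝒫) := Σ_{C∈𝒫} P(C)·V(C) ≤ 2·𝓔'_P(𝒫) := 2·Σ_{C∈𝒫} P(C)·V'(C). -/

import Mathlib

open Finset
open scoped BigOperators Classical

noncomputable section

namespace CRD

/-- The symmetric group on `n` items. -/
abbrev Perm (n : ℕ) := Equiv.Perm (Fin n)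

variable {n : ℕ}

/-- `d` is a metric on `α`. -/
def IsMetric {α : Type*} (d : α → α → ℝ) : Prop :=
  (∀ x y, 0 ≤ d x y) ∧ (∀ x y, d x y = 0 ↔ x = y) ∧
    (∀ x y, d x y = d y x) ∧ ∀ x y z, d x z ≤ d x y + d y z

/-- A ranking distribution: a probability distribution on the symmetric group. -/
def IsRankingDist (P : Perm n → ℝ) : Prop := (∀ σ, 0 ≤ P σ) ∧ ∑ σ, P σ = 1

/-- Mass of a region `C ⊆ S_n` under `P`. -/
def mass (P : Perm n → ℝ) (C : Finset (Perm n)) : ℝ := ∑ σ ∈ C, P σ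

/-- The ranking risk `L_P(σ) = E_{Σ ~ P}[d(Σ, σ)]`. -/
def riskL (d : Perm n → Perm n → ℝ) (P : Perm n → ℝ) (σ : Perm n) : ℝ := ∑ τ, P τ * d τ σ

/-- The variability `V_P = min_σ L_P(σ)`. -/
def V (d : Perm n → Perm n → ℝ) (P : Perm n → ℝ) : ℝ := ⨅ σ : Perm n, riskL d P σ

/-- The alternative dispersion `V'_P = (1/2) E[d(Σ, Σ')]`, `Σ, Σ'` i.i.d. with law `P`. -/
def V' (d : Perm n → Perm n → ℝ) (P : Perm n → ℝ) : ℝ :=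
  (1 / 2) * ∑ σ, ∑ τ, P σ * P τ * d σ τ

/-- The conditional law of `Σ ~ P` given `Σ ∈ C`. -/
def condDist (P : Perm n → ℝ) (C : Finset (Perm n)) : Perm n → ℝ :=
  fun σ => if σ ∈ C then P σ / mass P C else 0

/-- `σ` is a ranking median of `P` w.r.t. `d`: it minimizes the ranking risk. -/
def IsMedian (d : Perm n → Perm n → ℝ) (P : Perm n → ℝ) (σ : Perm n) : Prop :=
  ∀ τ, riskL d P σ ≤ riskL d P τ

/-- The Dirac mass at `σ`. -/
def dirac (σ : Perm n) : Perm n → ℝ := fun τ => if τ = σ then 1 else 0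

/-- `μ` is a coupling of `P` and `Q`. -/
def IsCoupling (P Q : Perm n → ℝ) (μ : Perm n → Perm n → ℝ) : Prop :=
  (∀ x y, 0 ≤ μ x y) ∧ (∀ x, ∑ y, μ x y = P x) ∧ ∀ y, ∑ x, μ x y = Q y

/-- The Wasserstein metric with cost `d`: infimum over couplings of `E[d(Σ, Σ')]`. -/
def W (d : Perm n → Perm n → ℝ) (P Q : Perm n → ℝ) : ℝ :=
  sInf {c : ℝ | ∃ μ, IsCoupling P Q μ ∧ c = ∑ x, ∑ y, μ x y * d x y}

/-- `Pp` is a partition of `S_n` into (nonempty, pairwise disjoint, covering) cells. -/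
def IsPartition (Pp : Finset (Finset (Perm n))) : Prop :=
  (∀ C ∈ Pp, C.Nonempty) ∧ (∀ C ∈ Pp, ∀ C' ∈ Pp, C ≠ C' → Disjoint C C') ∧
    Pp.sup id = Finset.univ

/-- The consensus ranking distribution `P_Pp = Σ_{C ∈ Pp} P(C) δ_{s C}`. -/
def CRDdist (P : Perm n → ℝ) (Pp : Finset (Finset (Perm n)))
    (s : Finset (Perm n) → Perm n) : Perm n → ℝ :=
  fun τ => ∑ C ∈ Pp, mass P C * dirac (s C) τ

/-- `𝓔_P(Pp) = Σ_{C ∈ Pp} P(C) V(C)`. -/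
def distortionE (d : Perm n → Perm n → ℝ) (P : Perm n → ℝ)
    (Pp : Finset (Finset (Perm n))) : ℝ :=
  ∑ C ∈ Pp, mass P C * V d (condDist P C)

/-- `𝓔'_P(Pp) = Σ_{C ∈ Pp} P(C) V'(C)`. -/
def distortionE' (d : Perm n → Perm n → ℝ) (P : Perm n → ℝ)
    (Pp : Finset (Finset (Perm n))) : ℝ :=
  ∑ C ∈ Pp, mass P C * V' d (condDist P C)

/-- The pairs `(i, j)` with `i < j`. -/
def pairsLt (n : ℕ) : Finset (Fin n × Fin n) := Finset.univ.filter fun p => p.1 < p.2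

/-- The Kendall tau distance: number of discordant pairs. -/
def kendall (σ σ' : Perm n) : ℝ :=
  ∑ p ∈ pairsLt n, if (σ p.1 < σ p.2 ↔ σ' p.1 < σ' p.2) then 0 else 1

/-- The pairwise marginal `p_{i,j} = P{Σ(i) < Σ(j)}`. -/
def pairProb (P : Perm n → ℝ) (i j : Fin n) : ℝ :=
  ∑ σ ∈ Finset.univ.filter (fun σ : Perm n => σ i < σ j), P σ

/-- Weak stochastic transitivity. -/
def IsWST (P : Perm n → ℝ) : Prop :=
  ∀ i j k : Fin n, 1 / 2 ≤ pairProb P i j → 1 / 2 ≤ pairProb P j k → 1 / 2 ≤ pairProb P i k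

/-- Strict stochastic transitivity. -/
def IsSST (P : Perm n → ℝ) : Prop :=
  IsWST P ∧ ∀ i j : Fin n, i < j → pairProb P i j ≠ 1 / 2

/-- `V''_P = Σ_{i<j} min(p_{i,j}, 1 - p_{i,j})`. -/
def V'' (P : Perm n → ℝ) : ℝ :=
  ∑ p ∈ pairsLt n, min (pairProb P p.1 p.2) (1 - pairProb P p.1 p.2)

/-- The ranking depth `D_P(σ) = max_{σ₁,σ₂} d(σ₁,σ₂) - L_P(σ)`. -/
def depth (d : Perm n → Perm n → ℝ) (P : Perm n → ℝ) (σ : Perm n) : ℝ :=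
  (⨆ p : Perm n × Perm n, d p.1 p.2) - riskL d P σ

/-- `‖d‖_∞ = max_{σ,σ'} d(σ,σ')`. -/
def dsup (d : Perm n → Perm n → ℝ) : ℝ := ⨆ p : Perm n × Perm n, d p.1 p.2

/-- The product (i.i.d.) weight of a sample `ω = (Σ_1, …, Σ_N)`. -/
def prodP (P : Perm n → ℝ) {N : ℕ} (ω : Fin N → Perm n) : ℝ := ∏ i, P (ω i)

/-- Probability of the event `E` under `N` i.i.d. draws from `P`. -/
def probN (P : Perm n → ℝ) (N : ℕ) (E : (Fin N → Perm n) → Prop) : ℝ :=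
  ∑ ω : Fin N → Perm n, if E ω then prodP P ω else 0

/-- `N_C`: number of sample points falling in `C`. -/
def Ncell {N : ℕ} (ω : Fin N → Perm n) (C : Finset (Perm n)) : ℕ :=
  (Finset.univ.filter fun i => ω i ∈ C).card

/-- Empirical cell frequency `P̂_N(C) = N_C / N`. -/
def Phat {N : ℕ} (ω : Fin N → Perm n) (C : Finset (Perm n)) : ℝ := (Ncell ω C : ℝ) / N

/-- The pairs `(i, j)` of sample indices with `i < j`. -/
def pairsLtN (N : ℕ) : Finset (Fin N × Fin N) := Finset.univ.filter fun p => p.1 < p.2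

/-- The empirical local variability `V̂'_N(C)`. -/
def Vhat' (d : Perm n → Perm n → ℝ) {N : ℕ} (ω : Fin N → Perm n)
    (C : Finset (Perm n)) : ℝ :=
  if 2 ≤ Ncell ω C then
    2 / ((Ncell ω C : ℝ) * ((Ncell ω C : ℝ) - 1)) *
      ∑ p ∈ pairsLtN N, if ω p.1 ∈ C ∧ ω p.2 ∈ C then d (ω p.1) (ω p.2) else 0
  else 0

/-- The plug-in empirical criterion `Ê'_N(Pp) = Σ_{C ∈ Pp} P̂_N(C) V̂'_N(C)`. -/
def Ehat' (d : Perm n → Perm n → ℝ) {N : ℕ} (ω : Fin N → Perm n)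
    (Pp : Finset (Finset (Perm n))) : ℝ :=
  ∑ C ∈ Pp, Phat ω C * Vhat' d ω C

/-- The symmetric kernel `Φ_Pp(σ,σ') = Σ_{C ∈ Pp} 1{(σ,σ') ∈ C×C}/P(C) · d(σ,σ')`. -/
def kernelPhi (d : Perm n → Perm n → ℝ) (P : Perm n → ℝ)
    (Pp : Finset (Finset (Perm n))) (σ σ' : Perm n) : ℝ :=
  ∑ C ∈ Pp, (if σ ∈ C ∧ σ' ∈ C then (1 : ℝ) else 0) / mass P C * d σ σ'

/-- The degree-2 U-statistic `Ũ_N(Pp)` built on the kernel `Φ_Pp`. -/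
def Ustat (d : Perm n → Perm n → ℝ) (P : Perm n → ℝ)
    (Pp : Finset (Finset (Perm n))) {N : ℕ} (ω : Fin N → Perm n) : ℝ :=
  2 / ((N : ℝ) * ((N : ℝ) - 1)) * ∑ p ∈ pairsLtN N, kernelPhi d P Pp (ω p.1) (ω p.2)

lemma V_le_riskL (d : Perm n → Perm n → ℝ) (Q : Perm n → ℝ) (σ : Perm n) :
    V d Q ≤ riskL d Q σ :=
  ciInf_le (Set.Finite.bddBelow (Set.finite_range _)) σ

lemma median_riskL_eq_V {d : Perm n → Perm n → ℝ} {Q : Perm n → ℝ} {σ : Perm n}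
    (h : IsMedian d Q σ) : riskL d Q σ = V d Q :=
  le_antisymm (le_ciInf h) (V_le_riskL d Q σ)

lemma condDist_isRankingDist {P : Perm n → ℝ} (hP : ∀ σ, 0 ≤ P σ)
    {C : Finset (Perm n)} (hC : 0 < mass P C) : IsRankingDist (condDist P C) := by
  constructor
  · intro σ
    unfold condDist
    split
    · exact div_nonneg (hP σ) hC.le
    · exact le_refl 0
  · simp only [condDist]
    rw [Finset.sum_ite_mem, Finset.univ_inter, ← Finset.sum_div]
    exact div_self hC.ne'

lemma V_le_two_V' {d : Perm n → Perm n → ℝ} (hd : ∀ x y, 0 ≤ d x y)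
    {Q : Perm n → ℝ} (hQ : IsRankingDist Q) : V d Q ≤ 2 * V' d Q := by
  have h1 : V d Q ≤ ∑ τ, Q τ * riskL d Q τ := by
    calc V d Q = ∑ τ, Q τ * V d Q := by
          rw [← Finset.sum_mul, hQ.2, one_mul]
      _ ≤ ∑ τ, Q τ * riskL d Q τ :=
          Finset.sum_le_sum fun τ _ =>
            mul_le_mul_of_nonneg_left (V_le_riskL d Q τ) (hQ.1 τ)
  have h2 : ∑ τ, Q τ * riskL d Q τ = 2 * V' d Q := by
    have key : ∑ τ, Q τ * riskL d Q τ = ∑ σ, ∑ τ, Q σ * Q τ * d σ τ := by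
      simp only [riskL, Finset.mul_sum]
      rw [Finset.sum_comm]
      exact Finset.sum_congr rfl fun σ _ => Finset.sum_congr rfl fun τ _ => by ring
    rw [key]
    unfold V'
    ring
  linarith

/-- Distortion bound: for any partition `Pp` of `S_n` with positive-mass
cells and any consensus ranking distribution built from local medians,
`W_d(P, P_Pp) ≤ 𝓔_P(Pp) ≤ 2 𝓔'_P(Pp)`. -/
theorem distortion_bound {n : ℕ} (hn : 1 ≤ n)
    (d : Perm n → Perm n → ℝ) (hd : IsMetric d)
    (P : Perm n → ℝ) (hP : IsRankingDist P)
    (Pp : Finset (Finset (Perm n))) (hPp : IsPartition Pp)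
    (hpos : ∀ C ∈ Pp, 0 < mass P C)
    (s : Finset (Perm n) → Perm n)
    (hs : ∀ C ∈ Pp, IsMedian d (condDist P C) (s C)) :
    W d P (CRDdist P Pp s) ≤ distortionE d P Pp ∧
      distortionE d P Pp ≤ 2 * distortionE' d P Pp := by
  obtain ⟨hdpos, -, -, -⟩ := hd
  obtain ⟨hPnn, hPsum⟩ := hP
  obtain ⟨-, hdisj, hcov⟩ := hPp
  -- Part 2 first
  have part2 : distortionE d P Pp ≤ 2 * distortionE' d P Pp := by
    unfold distortionE distortionE'
    rw [Finset.mul_sum]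
    refine Finset.sum_le_sum fun C hC => ?_
    have := V_le_two_V' hdpos (condDist_isRankingDist hPnn (hpos C hC))
      (d := d)
    calc mass P C * V d (condDist P C)
        ≤ mass P C * (2 * V' d (condDist P C)) :=
          mul_le_mul_of_nonneg_left this (hpos C hC).le
      _ = 2 * (mass P C * V' d (condDist P C)) := by ring
  refine ⟨?_, part2⟩
  -- unique cell containing each x
  have hcell : ∀ x : Perm n, ∀ g : Finset (Perm n) → ℝ,
      ∑ C ∈ Pp, (if x ∈ C then g C else 0) = ∑ C ∈ Pp.filter (x ∈ ·), g C := by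
    intro x g
    rw [Finset.sum_filter]
  have huniq : ∀ x : Perm n, ∃ C₀ ∈ Pp, x ∈ C₀ ∧
      ∀ C ∈ Pp, x ∈ C → C = C₀ := by
    intro x
    have hx : x ∈ Pp.sup id := by rw [hcov]; exact Finset.mem_univ x
    rw [Finset.mem_sup] at hx
    obtain ⟨C₀, hC₀, hxC₀⟩ := hx
    refine ⟨C₀, hC₀, hxC₀, fun C hC hxC => ?_⟩
    by_contra hne
    exact (Finset.disjoint_left.1 (hdisj C hC C₀ hC₀ hne)) hxC hxC₀
  have hsum_cell : ∀ x : Perm n,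
      ∑ C ∈ Pp, (if x ∈ C then P x else 0) = P x := by
    intro x
    obtain ⟨C₀, hC₀, hxC₀, huq⟩ := huniq x
    rw [Finset.sum_eq_single_of_mem C₀ hC₀]
    · simp [hxC₀]
    · intro C hC hne
      have : x ∉ C := fun hxC => hne (huq C hC hxC)
      simp [this]
  -- the coupling
  set μ : Perm n → Perm n → ℝ :=
    fun x y => ∑ C ∈ Pp, (if x ∈ C then P x else 0) * dirac (s C) y with hμ
  have hcoupling : IsCoupling P (CRDdist P Pp s) μ := by
    refine ⟨fun x y => ?_, fun x => ?_, fun y => ?_⟩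
    · refine Finset.sum_nonneg fun C _ => mul_nonneg ?_ ?_
      · split <;> simp [hPnn x]
      · unfold dirac; split <;> norm_num
    · rw [Finset.sum_comm]
      calc ∑ C ∈ Pp, ∑ y, (if x ∈ C then P x else 0) * dirac (s C) y
          = ∑ C ∈ Pp, (if x ∈ C then P x else 0) := by
            refine Finset.sum_congr rfl fun C _ => ?_
            rw [← Finset.mul_sum]
            unfold dirac
            rw [Finset.sum_ite_eq' Finset.univ (s C) (fun _ => (1:ℝ))]
            simp
        _ = P x := hsum_cell x
    · rw [Finset.sum_comm]
      unfold CRDdist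
      refine Finset.sum_congr rfl fun C _ => ?_
      rw [← Finset.sum_mul]
      congr 1
      unfold mass
      rw [Finset.sum_ite_mem, Finset.univ_inter]
  -- the cost of the coupling equals distortionE
  have hcost : ∑ x, ∑ y, μ x y * d x y = distortionE d P Pp := by
    have step : ∀ x : Perm n, ∑ y, μ x y * d x y =
        ∑ C ∈ Pp, (if x ∈ C then P x else 0) * d x (s C) := by
      intro x
      rw [hμ]
      simp only [Finset.sum_mul]
      rw [Finset.sum_comm]
      refine Finset.sum_congr rfl fun C _ => ?_
      unfold dirac
      calc ∑ y, (if x ∈ C then P x else 0) * (if y = s C then (1:ℝ) else 0) * d x y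
          = ∑ y, if y = s C then (if x ∈ C then P x else 0) * d x (s C) else 0 := by
            refine Finset.sum_congr rfl fun y _ => ?_
            by_cases hy : y = s C <;> simp [hy]
        _ = (if x ∈ C then P x else 0) * d x (s C) := by
            rw [Finset.sum_ite_eq' Finset.univ (s C)]
            simp
    calc ∑ x, ∑ y, μ x y * d x y
        = ∑ x, ∑ C ∈ Pp, (if x ∈ C then P x else 0) * d x (s C) :=
          Finset.sum_congr rfl fun x _ => step x
      _ = ∑ C ∈ Pp, ∑ x, (if x ∈ C then P x else 0) * d x (s C) :=
          Finset.sum_comm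
      _ = distortionE d P Pp := by
          unfold distortionE
          refine Finset.sum_congr rfl fun C hC => ?_
          rw [← median_riskL_eq_V (hs C hC)]
          unfold riskL condDist
          rw [Finset.mul_sum]
          refine Finset.sum_congr rfl fun τ _ => ?_
          by_cases hτ : τ ∈ C
          · simp only [hτ, if_true]
            field_simp
            exact (mul_div_cancel_right₀ _ (hpos C hC).ne').symm
          · simp [hτ]
  -- conclude via csInf_le
  have hbdd : BddBelow {c : ℝ | ∃ μ', IsCoupling P (CRDdist P Pp s) μ' ∧
      c = ∑ x, ∑ y, μ' x y * d x y} := by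
    refine ⟨0, fun c hc => ?_⟩
    obtain ⟨μ', hμ', rfl⟩ := hc
    exact Finset.sum_nonneg fun x _ => Finset.sum_nonneg fun y _ =>
      mul_nonneg (hμ'.1 x y) (hdpos x y)
  have hmem : distortionE d P Pp ∈ {c : ℝ | ∃ μ', IsCoupling P (CRDdist P Pp s) μ' ∧
      c = ∑ x, ∑ y, μ' x y * d x y} := ⟨μ, hcoupling, hcost.symm⟩
  exact csInf_le hbdd hmem

end CRD
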